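/- Let F ∈ ℂ[X] be a polynomial of degree n ≥ 1, let m ∈ ℂ and r > 0, let N be a natural number, let K ∈ ℝ with K ≥ 1, and let k be an integer with 0 ≤ k ≤ n. If T_k(0, 1, K, (F_Δ)^{[N]}) holds, where (F_Δ)^{[N]} denotes the N-th Graeffe iterate of F_Δ(X) := F(m + r·X), then the open disk D(m, r) contains exactly k roots of F counted with multiplicity. -/

import Mathlib

open Polynomial Finset

/-- The even part `F_e = ∑_j a_{2j} X^j` of a polynomial `F = ∑ a_i X^i`. -/
noncomputable def evenPart (F : Polynomial ℂ) : Polynomial ℂ :=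
  ∑ j ∈ Finset.range (F.natDegree + 1), Polynomial.C (F.coeff (2 * j)) * Polynomial.X ^ j

/-- The odd part `F_o = ∑_j a_{2j+1} X^j` of a polynomial `F = ∑ a_i X^i`,
so that `F(X) = F_e(X²) + X·F_o(X²)`. -/
noncomputable def oddPart (F : Polynomial ℂ) : Polynomial ℂ :=
  ∑ j ∈ Finset.range (F.natDegree + 1), Polynomial.C (F.coeff (2 * j + 1)) * Polynomial.X ^ j

/-- The first Graeffe iterate `F^{[1]} := (−1)^n·(F_e² − X·F_o²)` where `n = deg F`. -/
noncomputable def graeffe (F : Polynomial ℂ) : Polynomial ℂ :=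
  (-1) ^ F.natDegree * (evenPart F ^ 2 - Polynomial.X * oddPart F ^ 2)

open Classical in
/-- The number of roots of `F` (counted with multiplicity) in the open disk `D(m, r)`. -/
noncomputable def rootsInDisk (F : Polynomial ℂ) (m : ℂ) (r : ℝ) : ℕ :=
  Multiset.card (F.roots.filter fun z => ‖z - m‖ < r)

open Metric
section Aux

lemma sum_range_two_mul {A : Type*} [AddCommMonoid A] (M : ℕ) (f : ℕ → A) :
    ∑ i ∈ Finset.range (2 * M), f i = ∑ j ∈ Finset.range M, (f (2 * j) + f (2 * j + 1)) := by
  induction M with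
  | zero => simp
  | succ M ih =>
      rw [Finset.sum_range_succ, ← ih, Nat.mul_succ,
        show 2 * M + 2 = (2 * M + 1) + 1 from rfl, Finset.sum_range_succ, Finset.sum_range_succ,
        add_assoc]

lemma eval_even_odd (F : Polynomial ℂ) (z : ℂ) :
    eval z F = eval (z ^ 2) (evenPart F) + z * eval (z ^ 2) (oddPart F) := by
  have hd : F.natDegree < 2 * (F.natDegree + 1) := by omega
  rw [eval_eq_sum_range' hd, sum_range_two_mul, evenPart, oddPart, eval_finset_sum,
    eval_finset_sum, Finset.mul_sum, ← Finset.sum_add_distrib]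
  refine Finset.sum_congr rfl fun j _ => ?_
  simp only [eval_mul, eval_C, eval_pow, eval_X, ← pow_mul]
  ring_nf

lemma eval_graeffe_sq (F : Polynomial ℂ) (y : ℂ) :
    eval (y ^ 2) (graeffe F) = (-1) ^ F.natDegree * (eval y F * eval (-y) F) := by
  have h1 := eval_even_odd F y
  have h2 := eval_even_odd F (-y)
  rw [neg_pow, show ((-1 : ℂ) ^ 2) = 1 by norm_num, one_mul] at h2
  simp only [graeffe, eval_mul, eval_pow, eval_neg, eval_one, eval_sub, eval_X, h1, h2]
  ring

lemma card_roots_complex {F : Polynomial ℂ} : Multiset.card F.roots = F.natDegree := by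
  have h := (IsAlgClosed.splits F).natDegree_eq_card_roots
  simpa using h.symm

lemma graeffe_eq (F : Polynomial ℂ) :
    graeffe F = C (F.leadingCoeff ^ 2) *
      ((F.roots.map (fun w => w ^ 2)).map (fun w => X - C w)).prod := by
  have hsp : F = C F.leadingCoeff * (F.roots.map (fun w => X - C w)).prod :=
    (IsAlgClosed.splits F).eq_prod_roots
  apply Polynomial.funext
  intro z
  obtain ⟨y, hy⟩ := IsAlgClosed.exists_pow_nat_eq z (n := 2) (by norm_num)
  subst hy
  rw [eval_graeffe_sq]
  have hF1 : eval y F = F.leadingCoeff * ((F.roots.map (fun w => y - w)).prod) := by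
    conv_lhs => rw [hsp]
    simp [eval_multiset_prod, Multiset.map_map, Function.comp]
  have hF2 : eval (-y) F =
      F.leadingCoeff * (-1) ^ F.natDegree * ((F.roots.map (fun w => y + w)).prod) := by
    conv_lhs => rw [hsp]
    simp only [eval_mul, eval_C, eval_multiset_prod, Multiset.map_map, Function.comp,
      eval_sub, eval_X, eval_C]
    rw [mul_assoc]
    congr 1
    have : (F.roots.map (fun w => -y - w)) = (F.roots.map (fun w => -(y + w))) := by
      apply Multiset.map_congr rfl; intro w _; ring
    rw [this, show (F.roots.map (fun w => -(y + w))) =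
        (F.roots.map (fun w => y + w)).map (fun t => -t) by rw [Multiset.map_map]; rfl]
    rw [Multiset.prod_map_neg]
    simp [card_roots_complex]
  have hRHS : eval (y ^ 2) (C (F.leadingCoeff ^ 2) *
      ((F.roots.map (fun w => w ^ 2)).map (fun w => X - C w)).prod) =
      F.leadingCoeff ^ 2 * ((F.roots.map (fun w => (y - w) * (y + w))).prod) := by
    simp only [eval_mul, eval_C, eval_multiset_prod, Multiset.map_map, Function.comp,
      eval_sub, eval_X, eval_C]
    congr 1
    apply congr_arg
    apply Multiset.map_congr rfl
    intro w _; ring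
  rw [hRHS, hF1, hF2, Multiset.prod_map_mul]
  have h1 : ((-1 : ℂ) ^ F.natDegree) ^ 2 = 1 := by
    rw [← pow_mul, mul_comm, pow_mul]; norm_num
  linear_combination (F.leadingCoeff ^ 2 * ((F.roots.map (fun w => y - w)).prod *
    (F.roots.map (fun w => y + w)).prod)) * h1

lemma monic_prod_X_sub_C (s : Multiset ℂ) : ((s.map (fun w => X - C w)).prod).Monic :=
  monic_multiset_prod_of_monic _ _ fun w _ => monic_X_sub_C w

lemma graeffe_roots (F : Polynomial ℂ) (hF : F ≠ 0) :
    (graeffe F).roots = F.roots.map (fun w => w ^ 2) := by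
  rw [graeffe_eq, roots_C_mul _ (pow_ne_zero 2 (leadingCoeff_ne_zero.2 hF)),
    roots_multiset_prod_X_sub_C]

lemma graeffe_natDegree (F : Polynomial ℂ) (hF : F ≠ 0) :
    (graeffe F).natDegree = F.natDegree := by
  rw [graeffe_eq, natDegree_C_mul (pow_ne_zero 2 (leadingCoeff_ne_zero.2 hF)),
    natDegree_multiset_prod_of_monic]
  · rw [Multiset.map_map, Multiset.map_map,
      Multiset.map_congr rfl (fun x _ => show ((natDegree ∘ fun w => X - C w) ∘ fun w : ℂ => w ^ 2) x = 1
        from natDegree_X_sub_C ((x : ℂ) ^ 2))]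
    simp [card_roots_complex]
  · intro f hf
    obtain ⟨w, _, rfl⟩ := Multiset.mem_map.1 hf
    exact monic_X_sub_C w
  
lemma graeffe_ne_zero (F : Polynomial ℂ) (hF : F ≠ 0) : graeffe F ≠ 0 := by
  rw [graeffe_eq]
  exact mul_ne_zero (by simp [leadingCoeff_ne_zero.2 hF])
    (monic_prod_X_sub_C _).ne_zero

lemma graeffe_iter (F : Polynomial ℂ) (hF : F ≠ 0) (N : ℕ) :
    graeffe^[N] F ≠ 0 ∧ (graeffe^[N] F).natDegree = F.natDegree ∧
      (graeffe^[N] F).roots = F.roots.map (fun w => w ^ (2 ^ N)) := by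
  induction N with
  | zero => simpa using hF
  | succ N ih =>
      obtain ⟨h0, hd, hr⟩ := ih
      rw [Function.iterate_succ_apply']
      refine ⟨graeffe_ne_zero _ h0, (graeffe_natDegree _ h0).trans hd, ?_⟩
      rw [graeffe_roots _ h0, hr, Multiset.map_map]
      apply Multiset.map_congr rfl
      intro w _
      simp only [Function.comp, sq, ← pow_add, pow_succ]
      ring

lemma multiset_prod_comp (s : Multiset (Polynomial ℂ)) (q : Polynomial ℂ) :
    s.prod.comp q = (s.map (fun p => p.comp q)).prod := by
  induction s using Multiset.induction with
  | empty => simp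
  | cons a s ih => simp [mul_comp, ih]

lemma comp_affine_eq (F : Polynomial ℂ) (m r : ℂ) (hr : r ≠ 0) :
    F.comp (C m + C r * X) = C (F.leadingCoeff * r ^ F.natDegree) *
      ((F.roots.map (fun α => (α - m) / r)).map (fun w => X - C w)).prod := by
  have hsp : F = C F.leadingCoeff * (F.roots.map (fun w => X - C w)).prod :=
    (IsAlgClosed.splits F).eq_prod_roots
  conv_lhs => rw [hsp]
  rw [mul_comp, C_comp, _root_.multiset_prod_comp, Multiset.map_map]
  have hfac : ∀ α : ℂ, ((fun p : Polynomial ℂ => p.comp (C m + C r * X)) ∘ fun w => X - C w) α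
      = C r * (X - C ((α - m) / r)) := by
    intro α
    simp only [Function.comp, sub_comp, X_comp, C_comp, mul_sub, ← C_mul,
      mul_div_cancel₀ _ hr]
    rw [map_sub]
    ring
  rw [Multiset.map_congr rfl (fun α _ => hfac α), Multiset.prod_map_mul, Multiset.map_const',
    Multiset.prod_replicate, card_roots_complex, ← C_pow, Multiset.map_map, ← mul_assoc, ← C_mul]
  rfl

lemma comp_affine_roots (F : Polynomial ℂ) (hF : F ≠ 0) (m r : ℂ) (hr : r ≠ 0) :
    (F.comp (C m + C r * X)).roots = F.roots.map (fun α => (α - m) / r) := by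
  rw [comp_affine_eq F m r hr,
    roots_C_mul _ (mul_ne_zero (leadingCoeff_ne_zero.2 hF) (pow_ne_zero _ hr)),
    roots_multiset_prod_X_sub_C]

lemma comp_affine_natDegree (F : Polynomial ℂ) (hF : F ≠ 0) (m r : ℂ) (hr : r ≠ 0) :
    (F.comp (C m + C r * X)).natDegree = F.natDegree := by
  rw [comp_affine_eq F m r hr,
    natDegree_C_mul (mul_ne_zero (leadingCoeff_ne_zero.2 hF) (pow_ne_zero _ hr)),
    natDegree_multiset_prod_of_monic]
  · rw [Multiset.map_map, Multiset.map_map,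
      Multiset.map_congr rfl (fun x _ =>
        show ((natDegree ∘ fun w => X - C w) ∘ fun α : ℂ => (α - m) / r) x = 1
          from natDegree_X_sub_C (((x : ℂ) - m) / r))]
    simp [card_roots_complex]
  · intro f hf
    obtain ⟨w, _, rfl⟩ := Multiset.mem_map.1 hf
    exact monic_X_sub_C w

lemma comp_affine_ne_zero (F : Polynomial ℂ) (hF : F ≠ 0) (m r : ℂ) (hr : r ≠ 0) :
    F.comp (C m + C r * X) ≠ 0 := by
  rw [comp_affine_eq F m r hr]
  exact mul_ne_zero (by simp [leadingCoeff_ne_zero.2 hF, hr, pow_ne_zero])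
    (monic_prod_X_sub_C _).ne_zero

lemma circleIntegrable_inv_sub {w : ℂ} (hw : ‖w‖ ≠ 1) :
    CircleIntegrable (fun z => (z - w)⁻¹) 0 1 := by
  rw [circleIntegrable_sub_inv_iff]
  right
  simp [Complex.dist_eq, hw]

lemma circleIntegrable_msum (s : Multiset ℂ) (hs : ∀ w ∈ s, ‖w‖ ≠ 1) :
    CircleIntegrable (fun z => (s.map (fun w => (z - w)⁻¹)).sum) 0 1 := by
  induction s using Multiset.induction with
  | empty => simpa using circleIntegrable_const (0 : ℂ) (0 : ℂ) 1
  | cons a s ih =>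
      have ha := hs a (Multiset.mem_cons_self a s)
      have h2 := ih (fun w hw => hs w (Multiset.mem_cons_of_mem hw))
      have := (circleIntegrable_inv_sub ha).add h2
      simpa [Multiset.map_cons, Multiset.sum_cons, Pi.add_def] using this

lemma circleIntegral_add {f g : ℂ → ℂ} {c : ℂ} {R : ℝ} (hf : CircleIntegrable f c R)
    (hg : CircleIntegrable g c R) :
    (∮ z in C(c, R), (f z + g z)) = (∮ z in C(c, R), f z) + ∮ z in C(c, R), g z := by
  simp only [circleIntegral, smul_add, intervalIntegral.integral_add hf.out hg.out]

lemma circleIntegral_inv_inside {w : ℂ} (hw : ‖w‖ < 1) :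
    (∮ z in C(0, 1), (z - w)⁻¹) = 2 * Real.pi * Complex.I :=
  circleIntegral.integral_sub_inv_of_mem_ball (by simpa [Complex.dist_eq] using hw)

lemma circleIntegral_inv_outside {w : ℂ} (hw : 1 < ‖w‖) :
    (∮ z in C(0, 1), (z - w)⁻¹) = 0 := by
  apply circleIntegral.integral_eq_zero_of_hasDerivWithinAt
    (f := fun z => Complex.log (1 - z * w⁻¹)) (by norm_num)
  intro z hz
  have hz1 : ‖z‖ = 1 := by simpa [Complex.dist_eq] using hz
  have hw0 : w ≠ 0 := by
    intro h; rw [h] at hw; simp at hw; linarith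
  have habs : ‖z * w⁻¹‖ < 1 := by
    rw [norm_mul, norm_inv, hz1, one_mul]
    rw [inv_lt_one_iff₀]
    right; exact hw
  have hne : 1 - z * w⁻¹ ≠ 0 := by
    intro h
    have : z * w⁻¹ = 1 := by linear_combination -h
    rw [this] at habs; simp at habs
  have hslit : 1 - z * w⁻¹ ∈ Complex.slitPlane := by
    rw [Complex.mem_slitPlane_iff]
    left
    have h1 : (z * w⁻¹).re ≤ ‖z * w⁻¹‖ := Complex.re_le_norm _
    simp only [Complex.sub_re, Complex.one_re]
    linarith
  have hg : HasDerivAt (fun z : ℂ => 1 - z * w⁻¹) (-w⁻¹) z := by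
    simpa using ((hasDerivAt_id z).mul_const w⁻¹).const_sub 1
  have h := (Complex.hasDerivAt_log hslit).comp z hg
  have heq : (1 - z * w⁻¹)⁻¹ * -w⁻¹ = (z - w)⁻¹ := by
    have h0 : 1 - z * w⁻¹ = (w - z) * w⁻¹ := by field_simp
    rw [h0, mul_inv, inv_inv, mul_assoc, mul_neg, mul_inv_cancel₀ hw0, mul_neg_one,
      ← inv_neg, neg_sub]
  rw [← heq]
  exact h.hasDerivWithinAt

lemma circleIntegral_count (s : Multiset ℂ) (hs : ∀ w ∈ s, ‖w‖ ≠ 1) :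
    (∮ z in C(0, 1), (s.map (fun w => (z - w)⁻¹)).sum) =
      (2 * Real.pi * Complex.I) *
        (Multiset.card (s.filter (fun w => ‖w‖ < 1)) : ℂ) := by
  classical
  induction s using Multiset.induction with
  | empty => simp [circleIntegral]
  | cons a s ih =>
      have ha := hs a (Multiset.mem_cons_self a s)
      have hs' : ∀ w ∈ s, ‖w‖ ≠ 1 := fun w hw => hs w (Multiset.mem_cons_of_mem hw)
      have hint : (∮ z in C(0,1), ((a ::ₘ s).map (fun w => (z - w)⁻¹)).sum) =
          (∮ z in C(0,1), (z - a)⁻¹) + ∮ z in C(0,1), (s.map (fun w => (z - w)⁻¹)).sum := by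
        rw [← circleIntegral_add (circleIntegrable_inv_sub ha) (circleIntegrable_msum s hs')]
        apply circleIntegral.integral_congr (by norm_num)
        intro z _
        simp [Multiset.map_cons, Multiset.sum_cons]
      rw [hint, ih hs']
      rcases lt_or_gt_of_ne ha with h | h
      · rw [circleIntegral_inv_inside h, Multiset.filter_cons_of_pos _ (by simpa using h)]
        simp only [Multiset.card_cons]
        push_cast
        ring
      · rw [circleIntegral_inv_outside h, Multiset.filter_cons_of_neg _ (by simp; linarith)]
        ring

lemma pellet (G : Polynomial ℂ) (n k : ℕ) (hG : G.natDegree = n) (hk : k ≤ n)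
    (hbig : ∑ i ∈ (Finset.range (n + 1)).erase k, ‖G.coeff i‖
      < ‖G.coeff k‖) :
    Multiset.card (G.roots.filter (fun z => ‖z‖ < 1)) = k := by
  classical
  set S : ℝ := ∑ i ∈ (Finset.range (n + 1)).erase k, ‖G.coeff i‖ with hS
  set a : ℂ := G.coeff k with ha_def
  have hS0 : 0 ≤ S := Finset.sum_nonneg fun i _ => (norm_nonneg _)
  have hapos : 0 < ‖a‖ := lt_of_le_of_lt hS0 hbig
  have ha : a ≠ 0 := by
    intro h; rw [h] at hapos; simp at hapos
  have hGne : G ≠ 0 := by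
    intro h; apply ha; rw [ha_def, h]; simp
  have hc : G.leadingCoeff ≠ 0 := leadingCoeff_ne_zero.2 hGne
  have hkmem : k ∈ Finset.range (n + 1) := Finset.mem_range.2 (by omega)
  -- sphere estimates
  have hsph : ∀ z : ℂ, ‖z‖ = 1 →
      ‖eval z G - a * z ^ k‖ ≤ S := by
    intro z hz1
    have hev : eval z G = ∑ i ∈ Finset.range (n + 1), G.coeff i * z ^ i :=
      eval_eq_sum_range' (by omega) z
    have : eval z G - a * z ^ k =
        ∑ i ∈ (Finset.range (n + 1)).erase k, G.coeff i * z ^ i := by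
      rw [hev, ← Finset.add_sum_erase _ _ hkmem]; ring
    rw [this]
    refine le_trans (norm_sum_le _ _) ?_
    apply le_of_eq
    refine Finset.sum_congr rfl fun i _ => ?_
    rw [norm_mul, norm_pow, hz1, one_pow, mul_one]
  have habs_azk : ∀ z : ℂ, ‖z‖ = 1 → ‖a * z ^ k‖ = ‖a‖ := by
    intro z hz1; rw [norm_mul, norm_pow, hz1, one_pow, mul_one]
  have hne : ∀ z : ℂ, ‖z‖ = 1 → eval z G ≠ 0 := by
    intro z hz1 h0
    have h1 := hsph z hz1
    rw [h0, zero_sub, norm_neg, habs_azk z hz1] at h1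
    linarith
  have hroot : ∀ w ∈ G.roots, ‖w‖ ≠ 1 := by
    intro w hw h1
    exact hne w h1 ((mem_roots hGne).1 hw)
  have hcard : Multiset.card G.roots = n := card_roots_complex.trans hG
  -- step (i): logarithmic derivative
  have hsp : G = C G.leadingCoeff * (G.roots.map (fun w => X - C w)).prod :=
    (IsAlgClosed.splits G).eq_prod_roots
  have hlogderiv : ∀ z : ℂ, ‖z‖ = 1 →
      (G.roots.map (fun w => (z - w)⁻¹)).sum
        = eval z (derivative G) / eval z G := by
    intro z hz1
    have hzw : ∀ w ∈ G.roots, z - w ≠ 0 := by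
      intro w hw h
      exact hroot w hw (by rw [show w = z by linear_combination -h, hz1])
    set Q : ℂ := ((G.roots.map (fun w => z - w)).prod) with hQ
    have hQne : Q ≠ 0 := by
      apply Multiset.prod_ne_zero
      intro h0
      obtain ⟨w, hw, heq⟩ := Multiset.mem_map.1 h0
      exact hzw w hw heq
    have hGz : eval z G = G.leadingCoeff * Q := by
      conv_lhs => rw [hsp]
      simp [eval_multiset_prod, Multiset.map_map, Function.comp, hQ]
    have hG'z : eval z (derivative G) = G.leadingCoeff *
        (G.roots.map (fun w => ((G.roots.erase w).map (fun v => z - v)).prod)).sum := by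
      have evalsum : ∀ (t : Multiset (Polynomial ℂ)), eval z t.sum = (t.map (eval z)).sum :=
        fun t => by simpa using map_multiset_sum (evalRingHom z) t
      conv_lhs => rw [hsp, derivative_C_mul, derivative_prod]
      rw [eval_mul, eval_C]
      congr 1
      rw [evalsum, Multiset.map_map]
      apply congr_arg Multiset.sum
      apply Multiset.map_congr rfl
      intro w _
      simp [Function.comp, derivative_X_sub_C, eval_multiset_prod, Multiset.map_map]
    have hterm : ∀ w ∈ G.roots,
        ((G.roots.erase w).map (fun v => z - v)).prod = (z - w)⁻¹ * Q := by
      intro w hw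
      have hfact : Q = (z - w) * ((G.roots.erase w).map (fun v => z - v)).prod := by
        rw [hQ]
        conv_lhs => rw [← Multiset.cons_erase hw]
        rw [Multiset.map_cons, Multiset.prod_cons]
      rw [hfact, ← mul_assoc, inv_mul_cancel₀ (hzw w hw), one_mul]
    have hsum : (G.roots.map
          (fun w => ((G.roots.erase w).map (fun v => z - v)).prod)).sum
        = ((G.roots.map (fun w => (z - w)⁻¹)).sum) * Q := by
      rw [Multiset.map_congr rfl hterm, ← Multiset.sum_map_mul_right]
    rw [hG'z, hsum, hGz]
    rw [show G.leadingCoeff * ((G.roots.map (fun w => (z - w)⁻¹)).sum * Q)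
        = (G.roots.map (fun w => (z - w)⁻¹)).sum * (G.leadingCoeff * Q) by ring,
      mul_div_assoc, div_self (mul_ne_zero hc hQne), mul_one]
  -- step (ii) and (iii)
  set A : ℂ → ℂ := fun z => (k : ℂ) * z⁻¹ with hA_def
  set B : ℂ → ℂ := fun z => eval z (derivative G) / eval z G - (k : ℂ) * z⁻¹ with hB_def
  have hsphz : ∀ z : ℂ, z ∈ sphere (0:ℂ) 1 → ‖z‖ = 1 := by
    intro z hz; simpa [Complex.dist_eq] using hz
  have hz0 : ∀ z : ℂ, ‖z‖ = 1 → z ≠ 0 := by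
    intro z hz1 h; rw [h] at hz1; simp at hz1
  have hAcont : ContinuousOn A (sphere (0:ℂ) 1) :=
    continuousOn_const.mul (continuousOn_id.inv₀ fun z hz => hz0 z (hsphz z hz))
  have hBcont : ContinuousOn B (sphere (0:ℂ) 1) := by
    apply ContinuousOn.sub
    · exact ((derivative G).continuous.continuousOn.div
        G.continuous.continuousOn fun z hz => hne z (hsphz z hz))
    · exact hAcont
  have hB0 : (∮ z in C(0, 1), B z) = 0 := by
    apply circleIntegral.integral_eq_zero_of_hasDerivWithinAt
      (f := fun z => Complex.log (eval z G / (a * z ^ k))) (by norm_num)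
    intro z hz
    have hz1 : ‖z‖ = 1 := hsphz z hz
    have hzne : z ≠ 0 := hz0 z hz1
    have hdenne : a * z ^ k ≠ 0 := mul_ne_zero ha (pow_ne_zero _ hzne)
    have hGzne : eval z G ≠ 0 := hne z hz1
    have hnum : HasDerivAt (fun z => eval z G) (eval z (derivative G)) z :=
      G.hasDerivAt z
    have hden : HasDerivAt (fun z : ℂ => a * z ^ k) (a * ((k : ℂ) * z ^ (k - 1))) z :=
      (hasDerivAt_pow k z).const_mul a
    have hu : HasDerivAt (fun z => eval z G / (a * z ^ k))
        ((eval z (derivative G) * (a * z ^ k)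
          - eval z G * (a * ((k : ℂ) * z ^ (k - 1)))) / (a * z ^ k) ^ 2) z :=
      hnum.div hden hdenne
    have humem : eval z G / (a * z ^ k) ∈ Complex.slitPlane := by
      have hdiff : eval z G / (a * z ^ k) - 1
          = (eval z G - a * z ^ k) / (a * z ^ k) := by
        field_simp
      have habs : ‖eval z G / (a * z ^ k) - 1‖ < 1 := by
        rw [hdiff, norm_div, habs_azk z hz1]
        rw [div_lt_one hapos]
        exact lt_of_le_of_lt (hsph z hz1) hbig
      rw [Complex.mem_slitPlane_iff]
      left
      have h1 := Complex.abs_re_le_norm (eval z G / (a * z ^ k) - 1)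
      have h2 : |(eval z G / (a * z ^ k) - 1).re| < 1 := lt_of_le_of_lt h1 habs
      rw [abs_lt] at h2
      have h3 : (eval z G / (a * z ^ k) - 1).re
          = (eval z G / (a * z ^ k)).re - 1 := by simp
      linarith [h2.1, h3 ▸ h2.1]
    have hlog := (Complex.hasDerivAt_log humem).comp z hu
    have heq : (eval z G / (a * z ^ k))⁻¹ *
        ((eval z (derivative G) * (a * z ^ k)
          - eval z G * (a * ((k : ℂ) * z ^ (k - 1)))) / (a * z ^ k) ^ 2) = B z := by
      rw [hB_def]
      rcases Nat.eq_zero_or_pos k with hk0 | hkpos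
      · subst hk0
        simp only [pow_zero, mul_one, Nat.cast_zero, zero_mul, mul_zero, sub_zero]
        field_simp
      · have hzk : z ^ k = z ^ (k - 1) * z := by
          conv_lhs => rw [show k = (k - 1) + 1 by omega]
          rw [pow_succ]
        rw [hzk]
        have hwne : z ^ (k - 1) ≠ 0 := pow_ne_zero _ hzne
        field_simp [hwne, hzne, ha, hGzne]
    rw [← heq]
    exact hlog.hasDerivWithinAt
  have hAint : (∮ z in C(0, 1), A z) = 2 * Real.pi * Complex.I * (k : ℂ) := by
    rw [hA_def]
    rw [circleIntegral.integral_const_mul]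
    have h := circleIntegral.integral_sub_center_inv (0 : ℂ) (R := 1) one_ne_zero
    simp only [sub_zero] at h
    rw [h]
    ring
  have hmain : (∮ z in C(0, 1), (G.roots.map (fun w => (z - w)⁻¹)).sum)
      = 2 * Real.pi * Complex.I * (k : ℂ) := by
    have hcongr : (∮ z in C(0, 1), (G.roots.map (fun w => (z - w)⁻¹)).sum)
        = ∮ z in C(0, 1), (A z + B z) := by
      apply circleIntegral.integral_congr (by norm_num)
      intro z hz
      have hz1 : ‖z‖ = 1 := hsphz z hz
      simp only [hA_def, hB_def]
      rw [hlogderiv z hz1]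
      ring
    rw [hcongr, circleIntegral_add
      (hAcont.circleIntegrable (by norm_num))
      (hBcont.circleIntegrable (by norm_num)), hB0, hAint, add_zero]
  rw [circleIntegral_count G.roots hroot] at hmain
  have hpi : (2 * Real.pi * Complex.I) ≠ 0 := by
    simp [Real.pi_ne_zero, Complex.I_ne_zero, Complex.ofReal_ne_zero]
  have := mul_left_cancel₀ hpi hmain
  exact_mod_cast this

end Aux

/-- **Correctness of the `T_k^G`-test** (Lemma `softtest:success` (b)): if
`T_k(0, 1, K, (F_Δ)^{[N]})` holds for some `K ≥ 1`, where `(F_Δ)^{[N]}` is the `N`-th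
Graeffe iterate of `F_Δ(X) := F(m + r·X)`, then `D(m, r)` contains exactly `k` roots of
`F` counted with multiplicity. -/
theorem tkG_test_correct (F : Polynomial ℂ) (n : ℕ) (hn : 1 ≤ n) (hdeg : F.natDegree = n)
    (m : ℂ) (r : ℝ) (hr : 0 < r) (N : ℕ) (K : ℝ) (hK : 1 ≤ K) (k : ℕ) (hk : k ≤ n)
    (hT : K * ∑ i ∈ (Finset.range (n + 1)).erase k,
        ‖(graeffe^[N] (F.comp (Polynomial.C m + Polynomial.C (r : ℂ) * Polynomial.X))).coeff i‖ <
      ‖(graeffe^[N] (F.comp (Polynomial.C m + Polynomial.C (r : ℂ) * Polynomial.X))).coeff k‖) :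
    rootsInDisk F m r = k := by
  classical
  have hrne : (r : ℂ) ≠ 0 := Complex.ofReal_ne_zero.2 (ne_of_gt hr)
  have hFne : F ≠ 0 := by
    intro h; rw [h, natDegree_zero] at hdeg; omega
  set FΔ := F.comp (C m + C (r : ℂ) * X) with hFΔ
  have hFΔne : FΔ ≠ 0 := comp_affine_ne_zero F hFne m r hrne
  have hFΔdeg : FΔ.natDegree = n := (comp_affine_natDegree F hFne m r hrne).trans hdeg
  have hFΔroots : FΔ.roots = F.roots.map (fun α => (α - m) / (r : ℂ)) :=
    comp_affine_roots F hFne m r hrne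
  obtain ⟨hGne, hGdeg, hGroots⟩ := graeffe_iter FΔ hFΔne N
  have hS0 : 0 ≤ ∑ i ∈ (Finset.range (n + 1)).erase k,
      ‖(graeffe^[N] FΔ).coeff i‖ :=
    Finset.sum_nonneg fun i _ => norm_nonneg _
  have hbig : ∑ i ∈ (Finset.range (n + 1)).erase k,
      ‖(graeffe^[N] FΔ).coeff i‖ < ‖(graeffe^[N] FΔ).coeff k‖ :=
    lt_of_le_of_lt (le_mul_of_one_le_left hS0 hK) hT
  have hp := pellet (graeffe^[N] FΔ) n k (hGdeg.trans hFΔdeg) hk hbig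
  rw [hGroots, hFΔroots, Multiset.map_map, Multiset.filter_map, Multiset.card_map] at hp
  rw [rootsInDisk, ← hp]
  apply congr_arg
  apply Multiset.filter_congr
  intro α _
  simp only [Function.comp_apply, norm_pow, norm_div, Complex.norm_real, Real.norm_eq_abs]
  rw [abs_of_pos hr,
    pow_lt_one_iff_of_nonneg (by positivity) (by positivity), div_lt_one hr]
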